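/- Let G be a group with a (g,h)-weak Sierpiński subset E, and suppose the pair (g,h) does not freely generate the subgroup H = ⟨g,h⟩ (i.e., some nontrivial reduced word in g,h equals the identity). Then there is a (g,h)-weak Sierpiński subset contained in H, namely a subset E' ⊆ H with distinct a', b' ∈ E' satisfying gE' = E' \ {a'} and hE' = E' \ {b'}. -/

import Mathlib

namespace WSaux

/-- forbidden adjacent pair (an inverse pair). -/
def Bd (u v : Bool × Bool) : Prop := u.1 = v.1 ∧ u.2 = !v.2

/-- reduced word -/
def Rd (L : List (Bool × Bool)) : Prop := List.IsChain (fun u v => ¬ Bd u v) L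

variable {G : Type*} [Group G]

/-- letter evaluation -/
def Lett (g h : G) (x : Bool × Bool) : G :=
  cond x.2 (if x.1 then g else h) (if x.1 then g else h)⁻¹

/-- word evaluation -/
def ev (g h : G) (L : List (Bool × Bool)) : G := (L.map (Lett g h)).prod

lemma ev_nil (g h : G) : ev g h [] = 1 := rfl

lemma ev_cons (g h : G) (c : Bool × Bool) (L : List (Bool × Bool)) :
    ev g h (c :: L) = Lett g h c * ev g h L := by simp [ev]

lemma ev_append (g h : G) (L₁ L₂ : List (Bool × Bool)) :
    ev g h (L₁ ++ L₂) = ev g h L₁ * ev g h L₂ := by simp [ev]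

lemma rd_reduce (L : List (Bool × Bool)) : Rd (FreeGroup.reduce L) := by
  induction L with
  | nil => simp [Rd]
  | cons x L ih =>
    rw [FreeGroup.reduce.cons]
    cases hred : FreeGroup.reduce L with
    | nil => simp [Rd]
    | cons hd tl =>
      rw [hred] at ih
      dsimp only
      split_ifs with hbad
      · exact ih.tail
      · exact List.isChain_cons_cons.2 ⟨hbad, ih⟩

lemma bd_symm {u v : Bool × Bool} (h : Bd u v) : Bd v u := by
  obtain ⟨h1, h2⟩ := h
  exact ⟨h1.symm, by simp [h2]⟩

lemma lett_inv_of_bd (g h : G) {u v : Bool × Bool} (hbd : Bd u v) :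
    Lett g h u = (Lett g h v)⁻¹ := by
  obtain ⟨x, s⟩ := u
  obtain ⟨y, t⟩ := v
  obtain ⟨h1, h2⟩ := hbd
  dsimp at h1 h2
  subst h1 h2
  cases t <;> simp [Lett]

/-- a minimal nontrivial relation is cyclically reduced -/
lemma cycred (g h : G) (n : ℕ)
    (hmin : ∀ m, (∃ M : List (Bool × Bool), Rd M ∧ M ≠ [] ∧ ev g h M = 1 ∧ M.length = m) → n ≤ m)
    (L : List (Bool × Bool)) (hRd : Rd L) (hne : L ≠ []) (hev : ev g h L = 1)
    (hlen : L.length = n) : ¬ Bd (L.getLast hne) (L.head hne) := by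
  intro hbd
  obtain ⟨c, T, rfl⟩ : ∃ c T, L = c :: T := by
    cases L with
    | nil => exact absurd rfl hne
    | cons c T => exact ⟨c, T, rfl⟩
  rcases List.eq_nil_or_concat T with rfl | ⟨T', d, hT⟩
  · -- L = [c] : Bd c c impossible
    simp only [List.getLast_singleton, List.head_cons] at hbd
    obtain ⟨-, h2⟩ := hbd
    simp at h2
  · rw [List.concat_eq_append] at hT
    subst hT
    have hlast : (c :: (T' ++ [d])).getLast hne = d := List.getLast_concat (l := c :: T')
    rw [hlast, List.head_cons] at hbd
    -- Lett c = (Lett d)⁻¹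
    have hlc : Lett g h c = (Lett g h d)⁻¹ := by
      rw [lett_inv_of_bd g h (bd_symm hbd)]
    have hev' : ev g h T' = 1 := by
      rw [show c :: (T' ++ [d]) = [c] ++ T' ++ [d] by simp, ev_append, ev_append] at hev
      have e1 : ev g h [d] = Lett g h d := by simp [ev]
      have e2 : ev g h [c] = Lett g h c := by simp [ev]
      rw [e1, e2, hlc] at hev
      calc ev g h T' = Lett g h d * ((Lett g h d)⁻¹ * ev g h T' * Lett g h d) * (Lett g h d)⁻¹ := by
            group
        _ = 1 := by rw [hev]; group
    rcases List.eq_nil_or_concat T' with rfl | hT'ne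
    · -- L = [c, d], Rd forbids adjacent inverse pair
      have : ¬ Bd c d := (List.isChain_cons_cons.1 hRd).1
      exact this (bd_symm hbd)
    · have hT'nenil : T' ≠ [] := by
        obtain ⟨l, a, rfl⟩ := hT'ne; simp
      have hinf : T' <:+: (c :: (T' ++ [d])) := ⟨[c], [d], by simp⟩
      have hrd' : Rd T' := hRd.infix hinf
      have := hmin T'.length ⟨T', hrd', hT'nenil, hev', rfl⟩
      have hlen' : (c :: (T' ++ [d])).length = T'.length + 2 := by simp
      omega

/-- Core combinatorial lemma: if `X` is a set with `pX = X \\ {1}` (elementwise) and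
`qX = X`, then the first-applied letter of a minimal nontrivial relation cannot be
the inverse of the generator corresponding to `p`. -/
lemma core (g h p q : G) (c₀ : Bool)
    (hfc : ∀ x : Bool, (if x then g else h) = if x = c₀ then p else q)
    (X : Set G) (n : ℕ)
    (hmin : ∀ m, (∃ M : List (Bool × Bool), Rd M ∧ M ≠ [] ∧ ev g h M = 1 ∧ M.length = m) → n ≤ m)
    (h1 : (1 : G) ∈ X)
    (hp1 : ∀ x ∈ X, p * x ∈ X) (hp2 : ∀ x ∈ X, p * x ≠ 1)
    (hp3 : ∀ x ∈ X, x ≠ 1 → p⁻¹ * x ∈ X)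
    (hq1 : ∀ x ∈ X, q * x ∈ X) (hq2 : ∀ x ∈ X, q⁻¹ * x ∈ X)
    (L : List (Bool × Bool)) (hRd : Rd L) (hne : L ≠ []) (hev : ev g h L = 1)
    (hlen : L.length = n) : L.getLast hne ≠ (c₀, false) := by
  intro hlast
  have hcyc := cycred g h n hmin L hRd hne hev hlen
  have hpfalse : Lett g h (c₀, false) = p⁻¹ := by
    simp [Lett, hfc c₀]
  have key : ∀ S : List (Bool × Bool), S <:+ L → S ≠ [] → ev g h S ∉ X := by
    intro S
    induction S with
    | nil => intro _ hS; exact absurd rfl hS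
    | cons c S0 ih =>
      intro hsuf _ hmem
      by_cases h0 : S0 = []
      · subst h0
        obtain ⟨T, hT⟩ := hsuf
        subst hT
        have hc : c = (c₀, false) := (List.getLast_concat (l := T)).symm.trans hlast
        rw [hc, ev_cons, ev_nil, hpfalse, mul_one] at hmem
        exact hp2 _ hmem (mul_inv_cancel p)
      · have hsuf0 : S0 <:+ L := (List.suffix_cons c S0).trans hsuf
        have ihX : ev g h S0 ∉ X := ih hsuf0 h0
        rw [ev_cons] at hmem
        obtain ⟨x, s⟩ := c
        by_cases hx : x = c₀
        · have hxl : ∀ t : Bool, Lett g h (x, t) = cond t p p⁻¹ := by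
            intro t; cases t <;> simp [Lett, hx, hfc c₀]
          cases s
          · rw [hxl false] at hmem
            exact ihX (by simpa using hp1 _ hmem)
          · rw [hxl true] at hmem
            simp only [cond_true] at hmem
            by_cases h1v : p * ev g h S0 = 1
            · -- the suffix is itself a relation; by minimality it is all of L,
              -- contradicting cyclic reducedness
              have hSev : ev g h ((x, true) :: S0) = 1 := by
                rw [ev_cons, hxl true]; exact h1v
              have hSrd : Rd ((x, true) :: S0) := hRd.suffix hsuf
              have hle : n ≤ ((x, true) :: S0).length :=
                hmin _ ⟨_, hSrd, by simp, hSev, rfl⟩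
              have hge : ((x, true) :: S0).length ≤ n := hlen ▸ hsuf.length_le
              have hSL : (x, true) :: S0 = L :=
                hsuf.sublist.eq_of_length (by omega)
              subst hSL
              refine hcyc ?_
              rw [hlast, List.head_cons]
              exact ⟨hx.symm, rfl⟩
            · exact ihX (by simpa using hp3 _ hmem h1v)
        · have hxl : ∀ t : Bool, Lett g h (x, t) = cond t q q⁻¹ := by
            intro t; cases t <;> simp [Lett, hfc x, hx]
          cases s
          · rw [hxl false] at hmem
            exact ihX (by simpa using hq1 _ hmem)
          · rw [hxl true] at hmem
            exact ihX (by simpa using hq2 _ hmem)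
  exact key L (List.suffix_refl L) hne (by rw [hev]; exact h1)

lemma getLast_eq_of_concat {α : Type*} (M : List α) (hM : M ≠ []) (T2 : List α) (d : α)
    (hEq : M = T2 ++ [d]) : M.getLast hM = d := by
  subst hEq
  exact List.getLast_concat (l := T2)

/-- If there are sets `X` (with `gX = X \\ {1}`, `hX = X`) and `Y` (with `hY = Y \\ {1}`,
`gY = Y`), both containing `1`, then there is no nontrivial relation between `g` and `h`. -/
lemma no_relation (g h : G) (X Y : Set G)
    (hX1 : (1 : G) ∈ X)
    (hXg1 : ∀ x ∈ X, g * x ∈ X) (hXg2 : ∀ x ∈ X, g * x ≠ 1)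
    (hXg3 : ∀ x ∈ X, x ≠ 1 → g⁻¹ * x ∈ X)
    (hXh1 : ∀ x ∈ X, h * x ∈ X) (hXh2 : ∀ x ∈ X, h⁻¹ * x ∈ X)
    (hY1 : (1 : G) ∈ Y)
    (hYh1 : ∀ x ∈ Y, h * x ∈ Y) (hYh2 : ∀ x ∈ Y, h * x ≠ 1)
    (hYh3 : ∀ x ∈ Y, x ≠ 1 → h⁻¹ * x ∈ Y)
    (hYg1 : ∀ x ∈ Y, g * x ∈ Y) (hYg2 : ∀ x ∈ Y, g⁻¹ * x ∈ Y)
    (hrel : ∃ M : List (Bool × Bool), Rd M ∧ M ≠ [] ∧ ev g h M = 1 ∧ True) : False := by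
  classical
  obtain ⟨M0, hM0rd, hM0ne, hM0ev, -⟩ := hrel
  have hex : ∃ m, ∃ M : List (Bool × Bool), Rd M ∧ M ≠ [] ∧ ev g h M = 1 ∧ M.length = m :=
    ⟨M0.length, M0, hM0rd, hM0ne, hM0ev, rfl⟩
  set n := Nat.find hex with hn
  have hmin : ∀ m, (∃ M : List (Bool × Bool), Rd M ∧ M ≠ [] ∧ ev g h M = 1 ∧ M.length = m) →
      n ≤ m := fun m hm => Nat.find_min' hex hm
  obtain ⟨L, hRd, hne, hev, hlen⟩ := Nat.find_spec hex
  have hfcX : ∀ x : Bool, (if x then g else h) = if x = true then g else h := by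
    intro x; cases x <;> simp
  have hfcY : ∀ x : Bool, (if x then g else h) = if x = false then h else g := by
    intro x; cases x <;> simp
  have last2 : ∀ (M : List (Bool × Bool)) (hMne : M ≠ []), Rd M → ev g h M = 1 →
      M.length = n → (M.getLast hMne).2 = true := by
    intro M hMne hMrd hMev hMlen
    rcases hM : M.getLast hMne with ⟨x, s⟩
    cases s
    · cases x
      · exact absurd hM
          (core g h h g false hfcY Y n hmin hY1 hYh1 hYh2 hYh3 hYg1 hYg2 M hMrd hMne hMev hMlen)
      · exact absurd hM
          (core g h g h true hfcX X n hmin hX1 hXg1 hXg2 hXg3 hXh1 hXh2 M hMrd hMne hMev hMlen)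
    · rfl
  obtain ⟨c, T, rfl⟩ : ∃ c T, L = c :: T := by
    cases L with
    | nil => exact absurd rfl hne
    | cons c T => exact ⟨c, T, rfl⟩
  have hcyc := cycred g h n hmin _ hRd hne hev hlen
  -- rotation of L
  have hTrd : Rd T := List.IsChain.tail hRd
  have hrot_rd : Rd (T ++ [c]) := by
    rw [Rd, List.isChain_append]
    refine ⟨hTrd, List.isChain_singleton c, ?_⟩
    intro u hu v hv
    simp only [List.head?_cons, Option.mem_some_iff] at hv
    subst hv
    rcases List.eq_nil_or_concat T with rfl | ⟨T2, d, hT2⟩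
    · simp at hu
    · rw [List.concat_eq_append] at hT2
      subst hT2
      rw [List.getLast?_concat, Option.mem_some_iff] at hu
      subst hu
      have h1 : (c :: (T2 ++ [d])).getLast hne = d := by
        apply getLast_eq_of_concat _ _ (c :: T2) d
        simp
      intro hbd
      apply hcyc
      rw [h1, List.head_cons]
      exact hbd
  have hrot_ev : ev g h (T ++ [c]) = 1 := by
    rw [ev_cons] at hev
    have hT' : ev g h T = (Lett g h c)⁻¹ := eq_inv_of_mul_eq_one_right hev
    rw [ev_append, hT', show ev g h [c] = Lett g h c from by simp [ev], inv_mul_cancel]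
  have hc2 : c.2 = true := by
    have hrne : (T ++ [c]) ≠ [] := by simp
    have := last2 (T ++ [c]) hrne hrot_rd hrot_ev (by simpa using hlen)
    rwa [List.getLast_concat (l := T)] at this
  -- inversion of L
  set inv' : Bool × Bool → Bool × Bool := fun u => (u.1, !u.2) with hinv'
  have hLett : ∀ u, Lett g h (inv' u) = (Lett g h u)⁻¹ := by
    intro u; obtain ⟨x, s⟩ := u; cases s <;> simp [Lett, hinv']
  have hi_rd : Rd ((c :: T).reverse.map inv') := by
    rw [Rd, List.isChain_map, List.isChain_reverse]
    refine List.IsChain.imp ?_ hRd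
    intro u v huv hbd
    apply huv
    obtain ⟨h1, h2⟩ := hbd
    simp only [hinv'] at h1 h2
    refine ⟨h1.symm, ?_⟩
    simpa using h2.symm
  have hi_ev : ev g h ((c :: T).reverse.map inv') = 1 := by
    have key : ev g h ((c :: T).reverse.map inv') = (ev g h (c :: T))⁻¹ := by
      rw [ev, ev, List.prod_inv_reverse]
      congr 1
      rw [List.map_map, List.map_reverse, List.map_map]
      congr 1
      exact List.map_congr_left (fun u _ => hLett u)
    rw [key, hev, inv_one]
  have hi_ne : ((c :: T).reverse.map inv') ≠ [] := by simp
  have hi_len : ((c :: T).reverse.map inv').length = n := by simpa using hlen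
  have hi_last : ((c :: T).reverse.map inv').getLast hi_ne = inv' c := by
    apply getLast_eq_of_concat _ _ (T.reverse.map inv') (inv' c)
    simp
  have := last2 _ hi_ne hi_rd hi_ev hi_len
  rw [hi_last] at this
  simp only [hinv'] at this
  rw [hc2] at this
  simp at this

lemma ev_eq_lift (g h : G) (L : List (Bool × Bool)) :
    ev g h L = FreeGroup.lift (fun x : Bool => if x then g else h) (FreeGroup.mk L) := by
  rw [FreeGroup.lift_mk]; rfl

end WSaux

/-- If G has a (g,h)-weak Sierpiński subset and (g,h) is not a free pair, then the
subgroup H = ⟨g,h⟩ itself contains a (g,h)-weak Sierpiński subset. -/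
theorem wS_in_subgroup (G : Type*) [Group G] (g h : G) (E : Set G)
    (a b : G) (ha : a ∈ E) (hb : b ∈ E) (hab : a ≠ b)
    (hgE : (g * ·) '' E = E \ {a}) (hhE : (h * ·) '' E = E \ {b})
    (hnotfree : ¬ Function.Injective
      (FreeGroup.lift (fun x : Bool => if x then g else h) : FreeGroup Bool →* G)) :
    ∃ (E' : Set G) (a' b' : G),
      E' ⊆ (Subgroup.closure ({g, h} : Set G) : Set G) ∧
      a' ∈ E' ∧ b' ∈ E' ∧ a' ≠ b' ∧
      (g * ·) '' E' = E' \ {a'} ∧ (h * ·) '' E' = E' \ {b'} := by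
  classical
  set H := Subgroup.closure ({g, h} : Set G) with hH
  have hgH : g ∈ H := Subgroup.subset_closure (by simp)
  have hhH : h ∈ H := Subgroup.subset_closure (by simp)
  -- elementwise consequences of the hypotheses
  have eg1 : ∀ x ∈ E, g * x ∈ E := by
    intro x hx
    have : g * x ∈ E \ {a} := by rw [← hgE]; exact ⟨x, hx, rfl⟩
    exact this.1
  have eg2 : ∀ x ∈ E, g * x ≠ a := by
    intro x hx
    have : g * x ∈ E \ {a} := by rw [← hgE]; exact ⟨x, hx, rfl⟩
    simpa using this.2
  have eg3 : ∀ x ∈ E, x ≠ a → g⁻¹ * x ∈ E := by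
    intro x hx hxa
    have hmem : x ∈ (g * ·) '' E := by rw [hgE]; exact ⟨hx, by simpa using hxa⟩
    obtain ⟨y, hy, hyx⟩ := hmem
    have : g⁻¹ * x = y := by rw [← hyx]; simp
    rwa [this]
  have eg4 : g⁻¹ * a ∉ E := by
    intro hc
    have : g * (g⁻¹ * a) ∈ E \ {a} := by rw [← hgE]; exact ⟨_, hc, rfl⟩
    simp at this
  have eh1 : ∀ x ∈ E, h * x ∈ E := by
    intro x hx
    have : h * x ∈ E \ {b} := by rw [← hhE]; exact ⟨x, hx, rfl⟩
    exact this.1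
  have eh2 : ∀ x ∈ E, h * x ≠ b := by
    intro x hx
    have : h * x ∈ E \ {b} := by rw [← hhE]; exact ⟨x, hx, rfl⟩
    simpa using this.2
  have eh3 : ∀ x ∈ E, x ≠ b → h⁻¹ * x ∈ E := by
    intro x hx hxb
    have hmem : x ∈ (h * ·) '' E := by rw [hhE]; exact ⟨hx, by simpa using hxb⟩
    obtain ⟨y, hy, hyx⟩ := hmem
    have : h⁻¹ * x = y := by rw [← hyx]; simp
    rwa [this]
  have eh4 : h⁻¹ * b ∉ E := by
    intro hc
    have : h * (h⁻¹ * b) ∈ E \ {b} := by rw [← hhE]; exact ⟨_, hc, rfl⟩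
    simp at this
  by_cases hba : b * a⁻¹ ∈ H
  · -- the translated intersection with the coset Ha works
    refine ⟨{z : G | z * a ∈ E ∧ z ∈ (H : Set G)}, 1, b * a⁻¹,
      fun z hz => hz.2, ⟨by simpa using ha, one_mem H⟩,
      ⟨by rw [inv_mul_cancel_right]; exact hb, hba⟩, ?_, ?_, ?_⟩
    · intro hc
      exact hab (mul_inv_eq_one.1 hc.symm).symm
    · ext u
      constructor
      · rintro ⟨z, ⟨hz1, hz2⟩, rfl⟩
        refine ⟨⟨by rw [mul_assoc]; exact eg1 _ hz1, mul_mem hgH hz2⟩, ?_⟩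
        intro hc
        simp only [Set.mem_singleton_iff] at hc
        exact eg4 (by rwa [eq_inv_of_mul_eq_one_right hc] at hz1)
      · rintro ⟨⟨hu1, hu2⟩, hu3⟩
        simp only [Set.mem_singleton_iff] at hu3
        refine ⟨g⁻¹ * u, ⟨?_, mul_mem (inv_mem hgH) hu2⟩, by simp⟩
        rw [mul_assoc]
        exact eg3 _ hu1 (fun hc => hu3 (mul_right_cancel (b := a) (by rw [hc, one_mul])))
    · ext u
      constructor
      · rintro ⟨z, ⟨hz1, hz2⟩, rfl⟩
        refine ⟨⟨by rw [mul_assoc]; exact eh1 _ hz1, mul_mem hhH hz2⟩, ?_⟩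
        intro hc
        simp only [Set.mem_singleton_iff] at hc
        exact eh2 _ hz1 (by rw [← mul_assoc, hc, inv_mul_cancel_right])
      · rintro ⟨⟨hu1, hu2⟩, hu3⟩
        simp only [Set.mem_singleton_iff] at hu3
        refine ⟨h⁻¹ * u, ⟨?_, mul_mem (inv_mem hhH) hu2⟩, by simp⟩
        rw [mul_assoc]
        refine eh3 _ hu1 (fun hc => hu3 ?_)
        rw [← hc, mul_inv_cancel_right]
  · -- otherwise (g, h) would be a free pair
    exfalso
    obtain ⟨w, hw1, hw2⟩ : ∃ w : FreeGroup Bool,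
        (FreeGroup.lift (fun x : Bool => if x then g else h) : FreeGroup Bool →* G) w = 1 ∧
          w ≠ 1 := by
      by_contra hc
      push_neg at hc
      exact hnotfree ((injective_iff_map_eq_one _).2 fun w hw => hc w hw)
    have hrel : ∃ M : List (Bool × Bool),
        WSaux.Rd M ∧ M ≠ [] ∧ WSaux.ev g h M = 1 ∧ True := by
      refine ⟨w.toWord, ?_, ?_, ?_, trivial⟩
      · have := WSaux.rd_reduce (w.toWord)
        rwa [FreeGroup.reduce_toWord] at this
      · intro hc
        exact hw2 (FreeGroup.toWord_eq_nil_iff.1 hc)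
      · rw [WSaux.ev_eq_lift, FreeGroup.mk_toWord]
        exact hw1
    refine WSaux.no_relation g h {z : G | z * a ∈ E ∧ z ∈ (H : Set G)}
      {z : G | z * b ∈ E ∧ z ∈ (H : Set G)} ⟨by simpa using ha, one_mem H⟩
      ?_ ?_ ?_ ?_ ?_ ⟨by simpa using hb, one_mem H⟩ ?_ ?_ ?_ ?_ ?_ hrel
    · rintro z ⟨h1, h2⟩
      exact ⟨by rw [mul_assoc]; exact eg1 _ h1, mul_mem hgH h2⟩
    · rintro z ⟨h1, h2⟩ hc
      exact eg4 (by rwa [eq_inv_of_mul_eq_one_right hc] at h1)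
    · rintro z ⟨h1, h2⟩ hz1
      constructor
      · rw [mul_assoc]
        exact eg3 _ h1 (fun hc => hz1 (mul_right_cancel (b := a) (by rw [hc, one_mul])))
      · exact mul_mem (inv_mem hgH) h2
    · rintro z ⟨h1, h2⟩
      exact ⟨by rw [mul_assoc]; exact eh1 _ h1, mul_mem hhH h2⟩
    · rintro z ⟨h1, h2⟩
      constructor
      · rw [mul_assoc]
        refine eh3 _ h1 (fun hc => hba ?_)
        rw [← eq_mul_inv_of_mul_eq hc]
        exact h2
      · exact mul_mem (inv_mem hhH) h2
    · rintro z ⟨h1, h2⟩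
      exact ⟨by rw [mul_assoc]; exact eh1 _ h1, mul_mem hhH h2⟩
    · rintro z ⟨h1, h2⟩ hc
      exact eh4 (by rwa [eq_inv_of_mul_eq_one_right hc] at h1)
    · rintro z ⟨h1, h2⟩ hz1
      constructor
      · rw [mul_assoc]
        exact eh3 _ h1 (fun hc => hz1 (mul_right_cancel (b := b) (by rw [hc, one_mul])))
      · exact mul_mem (inv_mem hhH) h2
    · rintro z ⟨h1, h2⟩
      exact ⟨by rw [mul_assoc]; exact eg1 _ h1, mul_mem hgH h2⟩
    · rintro z ⟨h1, h2⟩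
      constructor
      · rw [mul_assoc]
        refine eg3 _ h1 (fun hc => hba ?_)
        have hz : z = a * b⁻¹ := eq_mul_inv_of_mul_eq hc
        have hz' : z⁻¹ = b * a⁻¹ := by rw [hz, mul_inv_rev, inv_inv]
        rw [← hz']
        exact inv_mem h2
      · exact mul_mem (inv_mem hgH) h2
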